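/- Let d, n be positive integers and let Ω₁, …, Ωₙ be nonempty compact convex subsets of ℝ^d. Then the infimum r* = inf over x ∈ ℝ^d of max over i of dist(x, Ωᵢ) is attained, and moreover it is attained at some point x* belonging to the convex hull of ⋃ᵢ Ωᵢ. -/

import Mathlib

open Metric Set

/-- The convex join of two compact sets is compact. -/
lemma isCompact_convexJoin_aux {E : Type*} [NormedAddCommGroup E] [NormedSpace ℝ E]
    {s t : Set E} (hs : IsCompact s) (ht : IsCompact t) :
    IsCompact (convexJoin ℝ s t) := by
  have h : convexJoin ℝ s t =
      (fun p : E × E × ℝ => (1 - p.2.2) • p.1 + p.2.2 • p.2.1) ''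
        (s ×ˢ t ×ˢ Set.Icc (0 : ℝ) 1) := by
    ext x
    simp only [mem_convexJoin, segment_eq_image, Set.mem_image, Set.mem_prod]
    constructor
    · rintro ⟨a, ha, b, hb, θ, hθ, rfl⟩
      exact ⟨(a, b, θ), ⟨ha, hb, hθ⟩, rfl⟩
    · rintro ⟨⟨a, b, θ⟩, ⟨ha, hb, hθ⟩, rfl⟩
      exact ⟨a, ha, b, hb, θ, hθ, rfl⟩
  rw [h]
  exact (hs.prod (ht.prod isCompact_Icc)).image (by fun_prop)

/-- The convex hull of a finite union of nonempty compact convex sets is compact. -/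
lemma isCompact_convexHull_iUnion_aux {E : Type*} [NormedAddCommGroup E] [NormedSpace ℝ E] :
    ∀ (n : ℕ) (Ω : Fin n → Set E), (∀ i, (Ω i).Nonempty) → (∀ i, IsCompact (Ω i)) →
      (∀ i, Convex ℝ (Ω i)) → IsCompact (convexHull ℝ (⋃ i, Ω i)) := by
  intro n
  induction n with
  | zero =>
    intro Ω _ _ _
    simp
  | succ m ih =>
    intro Ω hne hcpt hconv
    rcases Nat.eq_zero_or_pos m with rfl | hm
    · have h1 : (⋃ i, Ω i) = Ω 0 := by
        apply Set.Subset.antisymm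
        · apply Set.iUnion_subset
          intro i
          have : i = 0 := Fin.eq_zero i
          rw [this]
        · exact Set.subset_iUnion Ω 0
      rw [h1, (hconv 0).convexHull_eq]
      exact hcpt 0
    · have hU : (⋃ i, Ω i) = Ω 0 ∪ ⋃ i : Fin m, Ω i.succ := by
        ext x
        simp only [Set.mem_iUnion, Set.mem_union, Fin.exists_fin_succ]
      rw [hU, convexHull_union (hne 0)
          (Set.nonempty_iUnion.2 ⟨⟨0, hm⟩, hne (Fin.succ ⟨0, hm⟩)⟩)]
      exact isCompact_convexJoin_aux
        (by rw [(hconv 0).convexHull_eq]; exact hcpt 0)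
        (ih _ (fun i => hne i.succ) (fun i => hcpt i.succ) (fun i => hconv i.succ))

/-- Nonexpansiveness at fixed points of the metric projection onto a convex set. -/
lemma dist_proj_le_aux {F : Type*} [NormedAddCommGroup F] [InnerProductSpace ℝ F]
    {K : Set F} {u v z : F} (hz : z ∈ K)
    (h : ∀ w ∈ K, inner ℝ (u - v) (w - v) ≤ (0 : ℝ)) :
    dist v z ≤ dist u z := by
  have h1 : inner ℝ (u - v) (z - v) ≤ (0 : ℝ) := h z hz
  have key : ‖v - z‖ ^ 2 ≤ ‖u - z‖ ^ 2 := by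
    have huz : u - z = (u - v) + (v - z) := by abel
    rw [huz, norm_add_sq_real]
    have h2 : inner ℝ (u - v) (v - z) = -(inner ℝ (u - v) (z - v) : ℝ) := by
      rw [← inner_neg_right]
      congr 1
      abel
    nlinarith [sq_nonneg ‖u - v‖]
  rw [dist_eq_norm, dist_eq_norm]
  nlinarith [norm_nonneg (v - z), norm_nonneg (u - z)]

/-- **Attainment of the SIB radius.** The infimum `r* = inf_x max_i dist(x, Ωᵢ)` is
attained, at some point `x*` of the convex hull of `⋃ i, Ωᵢ`. -/
theorem sib_radius_attained (d n : ℕ) (hd : 0 < d) (hn : 0 < n)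
    (Ω : Fin n → Set (EuclideanSpace ℝ (Fin d)))
    (hne : ∀ i, (Ω i).Nonempty) (hcpt : ∀ i, IsCompact (Ω i))
    (hconv : ∀ i, Convex ℝ (Ω i)) :
    ∃ xs ∈ convexHull ℝ (⋃ i, Ω i),
      (⨆ i, Metric.infDist xs (Ω i)) =
        ⨅ x : EuclideanSpace ℝ (Fin d), ⨆ i, Metric.infDist x (Ω i) := by
  haveI : Nonempty (Fin n) := ⟨⟨0, hn⟩⟩
  set K := convexHull ℝ (⋃ i, Ω i) with hKdef
  have hKcpt : IsCompact K := isCompact_convexHull_iUnion_aux n Ω hne hcpt hconv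
  have hKconv : Convex ℝ K := convex_convexHull ℝ _
  have hΩK : ∀ i, Ω i ⊆ K := fun i =>
    (Set.subset_iUnion Ω i).trans (subset_convexHull ℝ _)
  have hKne : K.Nonempty := ((hne ⟨0, hn⟩).mono (hΩK _))
  -- the objective function and its basic properties
  have hfs : ∀ x : EuclideanSpace ℝ (Fin d), (⨆ i, Metric.infDist x (Ω i)) =
      Finset.univ.sup' Finset.univ_nonempty (fun i => Metric.infDist x (Ω i)) :=
    fun x => (Finset.sup'_univ_eq_ciSup _).symm
  have hcont : Continuous fun x : EuclideanSpace ℝ (Fin d) =>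
      ⨆ i, Metric.infDist x (Ω i) := by
    have : Continuous fun x : EuclideanSpace ℝ (Fin d) =>
        Finset.univ.sup' Finset.univ_nonempty (fun i => Metric.infDist x (Ω i)) := by
      rw [continuous_iff_continuousAt]
      intro x
      exact ContinuousAt.finset_sup'_apply Finset.univ_nonempty
        (fun i _ => (continuous_infDist_pt (Ω i)).continuousAt)
    simpa only [← hfs] using this
  have hmono : ∀ x y : EuclideanSpace ℝ (Fin d),
      (∀ i, Metric.infDist y (Ω i) ≤ Metric.infDist x (Ω i)) →
      (⨆ i, Metric.infDist y (Ω i)) ≤ ⨆ i, Metric.infDist x (Ω i) := by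
    intro x y h
    rw [hfs x, hfs y]
    exact Finset.sup'_le _ _ fun i _ =>
      (h i).trans (Finset.le_sup' (fun j => Metric.infDist x (Ω j)) (Finset.mem_univ i))
  -- minimize over the compact set K
  obtain ⟨xs, hxsK, hmin⟩ := hKcpt.exists_isMinOn hKne hcont.continuousOn
  -- the minimum over K is a global minimum, via the projection onto K
  have hglobal : ∀ x : EuclideanSpace ℝ (Fin d),
      (⨆ i, Metric.infDist xs (Ω i)) ≤ ⨆ i, Metric.infDist x (Ω i) := by
    intro x
    obtain ⟨y, hyK, hy⟩ :=
      exists_norm_eq_iInf_of_complete_convex hKne hKcpt.isComplete hKconv x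
    have hproj := (norm_eq_iInf_iff_real_inner_le_zero hKconv hyK).1 hy
    have hle : ∀ i, Metric.infDist y (Ω i) ≤ Metric.infDist x (Ω i) := by
      intro i
      obtain ⟨z, hz, hzd⟩ := (hcpt i).exists_infDist_eq_dist (hne i) x
      calc Metric.infDist y (Ω i) ≤ dist y z := infDist_le_dist_of_mem hz
        _ ≤ dist x z := dist_proj_le_aux (hΩK i hz) hproj
        _ = Metric.infDist x (Ω i) := hzd.symm
    exact (hmin hyK).trans (hmono x y hle)
  refine ⟨xs, hxsK, le_antisymm (le_ciInf hglobal) (ciInf_le ?_ xs)⟩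
  refine ⟨0, ?_⟩
  rintro r ⟨x, rfl⟩
  calc (0 : ℝ) ≤ Metric.infDist x (Ω ⟨0, hn⟩) := infDist_nonneg
    _ ≤ ⨆ i, Metric.infDist x (Ω i) := by
        rw [hfs x]
        exact Finset.le_sup' (fun j => Metric.infDist x (Ω j)) (Finset.mem_univ _)
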